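/- For n ≥ 2 and 1 ≤ k < n, the formal context K^k_n has exactly 2^n + 2^{n−k} + 2^k − 1 formal concepts. -/

import Mathlib

/-- The intent (attribute derivation) of a set of objects. -/
def intentOf {G M : Type*} (I : G → M → Prop) (A : Set G) : Set M :=
  {m | ∀ g ∈ A, I g m}

/-- The extent (object derivation) of a set of attributes. -/
def extentOf {G M : Type*} (I : G → M → Prop) (B : Set M) : Set G :=
  {g | ∀ m ∈ B, I g m}

/-- The formal concepts of a context: pairs `(A, B)` with `A' = B` and `B' = A`. -/
def Concepts {G M : Type*} (I : G → M → Prop) : Set (Set G × Set M) :=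
  {p | intentOf I p.1 = p.2 ∧ extentOf I p.2 = p.1}

/-- The context `K^k_n = (S_n ∪ {g_1}, S_n ∪ {m_1, m_2}, I)`: objects are
`Fin n ⊕ Unit` (with `Sum.inr () = g_1`, and `i : Fin n` coding the element
`i+1` of `S_n = {1,…,n}`); attributes are `Fin n ⊕ Bool` (with
`Sum.inr false = m_1` and `Sum.inr true = m_2`); `m_1' = {1,…,k}` (codes
`i < k`) and `m_2' = {k+1,…,n}` (codes `k ≤ i`). -/
def Kk (n k : ℕ) : (Fin n ⊕ Unit) → (Fin n ⊕ Bool) → Prop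
  | Sum.inl g, Sum.inl m => g ≠ m
  | Sum.inr _, Sum.inl _ => True
  | Sum.inl g, Sum.inr false => (g : ℕ) < k
  | Sum.inl g, Sum.inr true => k ≤ (g : ℕ)
  | Sum.inr _, Sum.inr _ => False

namespace Stmt12Aux

/-- embedding of `Fin (n-k)` into `Fin n` as `{k,…,n-1}` -/
def e2 (n k : ℕ) (i : Fin (n - k)) : Fin n := ⟨k + i, by have := i.isLt; omega⟩

lemma e2_inj (n k : ℕ) : Function.Injective (e2 n k) := by
  intro a b h
  have : k + (a : ℕ) = k + b := congrArg Fin.val h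
  exact Fin.ext (by omega)

/-- index type for concepts -/
abbrev Idx (n k : ℕ) :=
  (Set (Fin n)) ⊕ ({S : Set (Fin k) // S.Nonempty} ⊕ ({S : Set (Fin (n - k)) // S.Nonempty} ⊕ Unit))

def f (n k : ℕ) (hkn : k ≤ n) : Idx n k → Set (Fin n ⊕ Unit) × Set (Fin n ⊕ Bool)
  | Sum.inl S => (Sum.inl '' S ∪ {Sum.inr ()}, Sum.inl '' Sᶜ)
  | Sum.inr (Sum.inl S) =>
      (Sum.inl '' (Fin.castLE hkn '' S.1), Sum.inl '' (Fin.castLE hkn '' S.1)ᶜ ∪ {Sum.inr false})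
  | Sum.inr (Sum.inr (Sum.inl S)) =>
      (Sum.inl '' (e2 n k '' S.1), Sum.inl '' (e2 n k '' S.1)ᶜ ∪ {Sum.inr true})
  | Sum.inr (Sum.inr (Sum.inr _)) => (∅, Set.univ)

lemma mem1 (n k : ℕ) (S : Set (Fin n)) :
    ((Sum.inl '' S ∪ {Sum.inr ()} : Set (Fin n ⊕ Unit)),
      (Sum.inl '' Sᶜ : Set (Fin n ⊕ Bool))) ∈ Concepts (Kk n k) := by
  constructor
  · ext m
    rcases m with j | b
    · simp only [intentOf, Kk]
      simp
      exact ⟨fun h hj => h j hj rfl, fun h a ha hc => h (hc ▸ ha)⟩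
    · simp [intentOf, Kk]
  · ext g
    rcases g with i | u
    · simp only [extentOf, Kk]
      simp
      exact ⟨fun h => by_contra fun hi => h i hi rfl, fun h a ha hc => ha (hc ▸ h)⟩
    · simp [extentOf, Kk]

lemma mem2 (n k : ℕ) (T : Set (Fin n)) (hT : T.Nonempty) (hTk : ∀ i ∈ T, (i : ℕ) < k) :
    ((Sum.inl '' T : Set (Fin n ⊕ Unit)),
     (Sum.inl '' Tᶜ ∪ {Sum.inr false} : Set (Fin n ⊕ Bool))) ∈ Concepts (Kk n k) := by
  constructor
  · ext m
    rcases m with j | b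
    · simp only [intentOf, Kk]
      simp
      exact ⟨fun h hj => h j hj rfl, fun h a ha hc => h (hc ▸ ha)⟩
    · simp only [intentOf, Set.mem_setOf_eq, Set.mem_union, Set.mem_image]
      cases b
      · simp only [Kk]
        simp
        exact fun a ha => hTk a ha
      · simp only [Kk]
        simp
        obtain ⟨x, hx⟩ := hT
        exact ⟨x, hx, hTk x hx⟩
  · ext g
    rcases g with i | u
    · simp only [extentOf, Kk]
      simp
      constructor
      · rintro ⟨-, h⟩
        exact by_contra fun hi => h i hi rfl
      · intro h
        exact ⟨hTk i h, fun a ha hc => ha (hc ▸ h)⟩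
    · simp [extentOf, Kk]

lemma mem3 (n k : ℕ) (T : Set (Fin n)) (hT : T.Nonempty) (hTk : ∀ i ∈ T, k ≤ (i : ℕ)) :
    ((Sum.inl '' T : Set (Fin n ⊕ Unit)),
     (Sum.inl '' Tᶜ ∪ {Sum.inr true} : Set (Fin n ⊕ Bool))) ∈ Concepts (Kk n k) := by
  constructor
  · ext m
    rcases m with j | b
    · simp only [intentOf, Kk]
      simp
      exact ⟨fun h hj => h j hj rfl, fun h a ha hc => h (hc ▸ ha)⟩
    · simp only [intentOf, Set.mem_setOf_eq, Set.mem_union, Set.mem_image]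
      cases b
      · simp only [Kk]
        simp
        obtain ⟨x, hx⟩ := hT
        exact ⟨x, hx, hTk x hx⟩
      · simp only [Kk]
        simp
        exact fun a ha => hTk a ha
  · ext g
    rcases g with i | u
    · simp only [extentOf, Kk]
      simp
      constructor
      · rintro ⟨-, h⟩
        exact by_contra fun hi => h i hi rfl
      · intro h
        exact ⟨hTk i h, fun a ha hc => ha (hc ▸ h)⟩
    · simp [extentOf, Kk]

lemma mem4 (n k : ℕ) :
    ((∅ : Set (Fin n ⊕ Unit)), (Set.univ : Set (Fin n ⊕ Bool))) ∈ Concepts (Kk n k) := by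
  constructor
  · ext m; simp [intentOf]
  · ext g
    rcases g with i | u
    · simp [extentOf, Kk]
    · simp [extentOf, Kk]

lemma f_mem (n k : ℕ) (hkn : k ≤ n) (x : Idx n k) : f n k hkn x ∈ Concepts (Kk n k) := by
  rcases x with S | (S | (S | u))
  · exact mem1 n k S
  · refine mem2 n k _ (S.2.image _) ?_
    rintro i ⟨x, _, rfl⟩; exact x.isLt
  · refine mem3 n k _ (S.2.image _) ?_
    rintro i ⟨x, _, rfl⟩; simp [e2]
  · exact mem4 n k

noncomputable def g (n k : ℕ) (hkn : k ≤ n) (p : Set (Fin n ⊕ Unit) × Set (Fin n ⊕ Bool)) :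
    Idx n k := by
  classical
  exact
    if Sum.inr () ∈ p.1 then Sum.inl {i | Sum.inl i ∈ p.1}
    else if hS : {i : Fin k | Sum.inl (Fin.castLE hkn i) ∈ p.1}.Nonempty then
      Sum.inr (Sum.inl ⟨_, hS⟩)
    else if hS' : {i : Fin (n - k) | Sum.inl (e2 n k i) ∈ p.1}.Nonempty then
      Sum.inr (Sum.inr (Sum.inl ⟨_, hS'⟩))
    else Sum.inr (Sum.inr (Sum.inr ()))

lemma g_f (n k : ℕ) (hkn : k ≤ n) : Function.LeftInverse (g n k hkn) (f n k hkn) := by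
  classical
  intro x
  rcases x with S | (S | (S | u))
  · dsimp only [f, g]
    rw [if_pos (by simp)]
    congr 1
    ext i; simp
  · dsimp only [f, g]
    rw [if_neg (by simp)]
    have hset : {i : Fin k | (Sum.inl (Fin.castLE hkn i) : Fin n ⊕ Unit)
        ∈ Sum.inl '' (Fin.castLE hkn '' S.1)} = S.1 := by
      ext i
      simp only [Set.mem_setOf_eq, Set.mem_image]
      constructor
      · rintro ⟨x, ⟨y, hy, rfl⟩, hx⟩
        have : y = i := Fin.castLE_injective hkn (Sum.inl_injective hx)
        exact this ▸ hy
      · intro hi; exact ⟨_, ⟨i, hi, rfl⟩, rfl⟩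
    rw [dif_pos (by rw [hset]; exact S.2)]
    simp only [Sum.inr.injEq, Sum.inl.injEq]
    exact Subtype.ext hset
  · dsimp only [f, g]
    rw [if_neg (by simp)]
    have hempty : ¬ {i : Fin k | (Sum.inl (Fin.castLE hkn i) : Fin n ⊕ Unit)
        ∈ Sum.inl '' (e2 n k '' S.1)}.Nonempty := by
      rintro ⟨i, x, ⟨y, hy, rfl⟩, hx⟩
      have h1 : e2 n k y = Fin.castLE hkn i := Sum.inl_injective hx
      have h2 : k + (y : ℕ) = (i : ℕ) := congrArg Fin.val h1
      have := i.isLt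
      omega
    rw [dif_neg hempty]
    have hset : {i : Fin (n - k) | (Sum.inl (e2 n k i) : Fin n ⊕ Unit)
        ∈ Sum.inl '' (e2 n k '' S.1)} = S.1 := by
      ext i
      simp only [Set.mem_setOf_eq, Set.mem_image]
      constructor
      · rintro ⟨x, ⟨y, hy, rfl⟩, hx⟩
        have : y = i := e2_inj n k (Sum.inl_injective hx)
        exact this ▸ hy
      · intro hi; exact ⟨_, ⟨i, hi, rfl⟩, rfl⟩
    rw [dif_pos (by rw [hset]; exact S.2)]
    simp only [Sum.inr.injEq, Sum.inl.injEq]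
    exact Subtype.ext hset
  · dsimp only [f, g]
    rw [if_neg (by simp), dif_neg (by simp), dif_neg (by simp)]

lemma eq_of_fst (n k : ℕ) (hkn : k ≤ n) (x : Idx n k) (A : Set (Fin n ⊕ Unit))
    (B : Set (Fin n ⊕ Bool)) (hI : intentOf (Kk n k) A = B)
    (hfst : (f n k hkn x).1 = A) : f n k hkn x = (A, B) := by
  have hfm := (f_mem n k hkn x).1
  have h2 : (f n k hkn x).2 = B := by rw [← hfm, hfst, hI]
  rw [← hfst, ← h2]

lemma f_surj (n k : ℕ) (hkn : k ≤ n) (p : Set (Fin n ⊕ Unit) × Set (Fin n ⊕ Bool))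
    (hp : p ∈ Concepts (Kk n k)) : ∃ x, f n k hkn x = p := by
  obtain ⟨A, B⟩ := p
  obtain ⟨hI, hE⟩ := hp
  simp only at hI hE
  by_cases h1 : Sum.inr () ∈ A
  · refine ⟨Sum.inl {i | Sum.inl i ∈ A}, eq_of_fst n k hkn _ A B hI ?_⟩
    show Sum.inl '' {i | Sum.inl i ∈ A} ∪ {Sum.inr ()} = A
    ext g
    rcases g with i | u
    · simp
    · simp [h1]
  · -- g₁ ∉ A; hence B contains some `Sum.inr b`
    have hb : ∃ b, Sum.inr b ∈ B := by
      rw [← hE] at h1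
      simp only [extentOf, Set.mem_setOf_eq] at h1
      push_neg at h1
      obtain ⟨m, hm, hKm⟩ := h1
      rcases m with j | b
      · exact absurd trivial hKm
      · exact ⟨b, hm⟩
    have hAlt : ∀ b, Sum.inr b ∈ B → ∀ x : Fin n, Sum.inl x ∈ A →
        (if b then k ≤ (x : ℕ) else (x : ℕ) < k) := by
      intro b hbB x hx
      rw [← hE] at hx
      have := hx (Sum.inr b) hbB
      cases b
      · exact this
      · exact this
    have hAempty : ∀ b, Sum.inr b ∉ B → A.Nonempty := by
      intro b hbB
      rcases Set.eq_empty_or_nonempty A with rfl | h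
      · exfalso
        apply hbB
        rw [← hI]
        simp [intentOf]
      · exact h
    by_cases hf : Sum.inr false ∈ B
    · by_cases ht : Sum.inr true ∈ B
      · -- both: A = ∅
        refine ⟨Sum.inr (Sum.inr (Sum.inr ())), eq_of_fst n k hkn _ A B hI ?_⟩
        show (∅ : Set (Fin n ⊕ Unit)) = A
        symm
        ext g
        simp only [Set.mem_empty_iff_false, iff_false]
        intro hg
        rcases g with x | u
        · have h1' := hAlt false hf x hg
          have h2' := hAlt true ht x hg
          simp at h1' h2'
          omega
        · exact h1 hg
      · -- m₁ ∈ B, m₂ ∉ B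
        have hAne := hAempty true ht
        have key : ∀ g ∈ A, ∃ i : Fin k, g = Sum.inl (Fin.castLE hkn i) := by
          intro g hg
          rcases g with x | u
          · have hxk := hAlt false hf x hg
            simp at hxk
            exact ⟨⟨x, hxk⟩, by simp [Fin.ext_iff]⟩
          · exact absurd hg h1
        set S : Set (Fin k) := {i | Sum.inl (Fin.castLE hkn i) ∈ A} with hSdef
        have hS : S.Nonempty := by
          obtain ⟨g, hg⟩ := hAne
          obtain ⟨i, rfl⟩ := key g hg
          exact ⟨i, hg⟩
        refine ⟨Sum.inr (Sum.inl ⟨S, hS⟩), eq_of_fst n k hkn _ A B hI ?_⟩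
        show Sum.inl '' (Fin.castLE hkn '' S) = A
        ext g
        constructor
        · rintro ⟨x, ⟨i, hi, rfl⟩, rfl⟩
          exact hi
        · intro hg
          obtain ⟨i, rfl⟩ := key g hg
          exact ⟨_, ⟨i, hg, rfl⟩, rfl⟩
    · -- m₁ ∉ B, so m₂ ∈ B
      have ht : Sum.inr true ∈ B := by
        obtain ⟨b, hbB⟩ := hb
        cases b
        · exact absurd hbB hf
        · exact hbB
      have hAne := hAempty false hf
      have key : ∀ g ∈ A, ∃ i : Fin (n - k), g = Sum.inl (e2 n k i) := by
        intro g hg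
        rcases g with x | u
        · have hxk := hAlt true ht x hg
          simp at hxk
          have hx := x.isLt
          refine ⟨⟨(x : ℕ) - k, by omega⟩, ?_⟩
          simp [e2, Fin.ext_iff]
          omega
        · exact absurd hg h1
      set S : Set (Fin (n - k)) := {i | Sum.inl (e2 n k i) ∈ A} with hSdef
      have hS : S.Nonempty := by
        obtain ⟨g, hg⟩ := hAne
        obtain ⟨i, rfl⟩ := key g hg
        exact ⟨i, hg⟩
      refine ⟨Sum.inr (Sum.inr (Sum.inl ⟨S, hS⟩)), eq_of_fst n k hkn _ A B hI ?_⟩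
      show Sum.inl '' (e2 n k '' S) = A
      ext g
      constructor
      · rintro ⟨x, ⟨i, hi, rfl⟩, rfl⟩
        exact hi
      · intro hg
        obtain ⟨i, rfl⟩ := key g hg
        exact ⟨_, ⟨i, hg, rfl⟩, rfl⟩

lemma card_nonempty_sets (α : Type*) [Fintype α] [DecidableEq α] :
    Nat.card {S : Set α // S.Nonempty} = 2 ^ Fintype.card α - 1 := by
  classical
  rw [Nat.card_eq_fintype_card]
  have h1 : Fintype.card {S : Set α // S.Nonempty}
      = Fintype.card {S : Set α // ¬ S = ∅} := by
    apply Fintype.card_congr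
    apply Equiv.subtypeEquivRight
    intro S
    exact Set.nonempty_iff_ne_empty
  rw [h1, Fintype.card_subtype_compl, Fintype.card_subtype_eq, Fintype.card_set]

end Stmt12Aux

/-- For `n ≥ 2` and `1 ≤ k < n`, the context `K^k_n` has exactly
`2^n + 2^(n-k) + 2^k − 1` formal concepts. -/
theorem stmt12 (n k : ℕ) (hn : 2 ≤ n) (hk1 : 1 ≤ k) (hkn : k < n) :
    Nat.card (Concepts (Kk n k)) = 2 ^ n + 2 ^ (n - k) + 2 ^ k - 1 := by
  classical
  have hkn' : k ≤ n := hkn.le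
  have hbij : Function.Bijective
      (fun x : Stmt12Aux.Idx n k =>
        (⟨Stmt12Aux.f n k hkn' x, Stmt12Aux.f_mem n k hkn' x⟩ : Concepts (Kk n k))) := by
    constructor
    · intro x y hxy
      have : Stmt12Aux.f n k hkn' x = Stmt12Aux.f n k hkn' y := congrArg Subtype.val hxy
      exact (Stmt12Aux.g_f n k hkn').injective this
    · rintro ⟨p, hp⟩
      obtain ⟨x, hx⟩ := Stmt12Aux.f_surj n k hkn' p hp
      exact ⟨x, Subtype.ext hx⟩
  have hcard : Nat.card (Concepts (Kk n k)) = Nat.card (Stmt12Aux.Idx n k) :=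
    (Nat.card_congr (Equiv.ofBijective _ hbij)).symm
  rw [hcard]
  have c1 : Nat.card (Set (Fin n)) = 2 ^ n := by
    rw [Nat.card_eq_fintype_card, Fintype.card_set, Fintype.card_fin]
  have c2 : Nat.card {S : Set (Fin k) // S.Nonempty} = 2 ^ k - 1 := by
    rw [Stmt12Aux.card_nonempty_sets, Fintype.card_fin]
  have c3 : Nat.card {S : Set (Fin (n - k)) // S.Nonempty} = 2 ^ (n - k) - 1 := by
    rw [Stmt12Aux.card_nonempty_sets, Fintype.card_fin]
  rw [show (Stmt12Aux.Idx n k) =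
    ((Set (Fin n)) ⊕ ({S : Set (Fin k) // S.Nonempty} ⊕
      ({S : Set (Fin (n - k)) // S.Nonempty} ⊕ Unit))) from rfl]
  rw [Nat.card_sum, Nat.card_sum, Nat.card_sum, c1, c2, c3, Nat.card_unique]
  have h2k : 1 ≤ 2 ^ k := Nat.one_le_two_pow
  have h2nk : 1 ≤ 2 ^ (n - k) := Nat.one_le_two_pow
  omega
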